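/- Let R be a von Neumann regular ring and A, B principal right ideals such that A ∩ B has finite height in the lattice L(R) of principal right ideals. Then A and B are perspective in L(R) if and only if A and B are isomorphic as right R-modules. Consequently, if a ∈ R has a reflexive inverse b with bR ∩ aR of finite height in L(R), then a is unit-regular. -/

import Mathlib

/-- A principal right ideal of `R`, viewed as a submodule of `R` over `Rᵐᵒᵖ`. -/
def IsPrincipalRightIdeal {R : Type*} [Ring R] (I : Submodule Rᵐᵒᵖ R) : Prop :=
  ∃ g : R, I = Submodule.span Rᵐᵒᵖ ({g} : Set R)

/-- `X` has finite height in the lattice `L(R)` of principal right ideals: the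
lengths of chains of principal right ideals below `X` are bounded. -/
def FinHeightInLR {R : Type*} [Ring R] (X : Submodule Rᵐᵒᵖ R) : Prop :=
  ∃ n : ℕ, ∀ l : List (Submodule Rᵐᵒᵖ R), l.Chain' (· < ·) →
    (∀ Y ∈ l, IsPrincipalRightIdeal Y ∧ Y ≤ X) → l.length ≤ n

section AuxMachinery


open Submodule

variable {R : Type*} [Ring R]

local notation "𝒮" => Submodule Rᵐᵒᵖ R

lemma mem_spanS {g x : R} : x ∈ Submodule.span Rᵐᵒᵖ ({g} : Set R) ↔ ∃ r : R, x = g * r := by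
  rw [Submodule.mem_span_singleton]
  constructor
  · rintro ⟨a, rfl⟩; exact ⟨a.unop, rfl⟩
  · rintro ⟨r, rfl⟩; exact ⟨MulOpposite.op r, rfl⟩

lemma self_mem_spanS {g : R} : g ∈ Submodule.span Rᵐᵒᵖ ({g} : Set R) :=
  mem_spanS.2 ⟨1, (mul_one g).symm⟩

lemma spanS_le {g : R} {I : 𝒮} : Submodule.span Rᵐᵒᵖ ({g} : Set R) ≤ I ↔ g ∈ I := by
  rw [Submodule.span_le, Set.singleton_subset_iff]; rfl

/-- complement of an idempotent -/
lemma idem_isCompl {e : R} (he : e * e = e) :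
    IsCompl (Submodule.span Rᵐᵒᵖ ({e} : Set R)) (Submodule.span Rᵐᵒᵖ ({1 - e} : Set R)) := by
  constructor
  · rw [disjoint_iff, eq_bot_iff]
    rintro x ⟨hx1, hx2⟩
    obtain ⟨r, rfl⟩ := mem_spanS.1 hx1
    obtain ⟨s, hs⟩ := mem_spanS.1 hx2
    have : e * (e * r) = e * ((1 - e) * s) := by rw [← hs]
    rw [← mul_assoc, he, ← mul_assoc, mul_sub, mul_one, he, sub_self, zero_mul] at this
    simp only [Submodule.mem_bot]
    exact this
  · rw [codisjoint_iff, eq_top_iff]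
    intro x _
    have : x = e * x + (1 - e) * x := by
      rw [sub_mul, one_mul]; abel
    rw [this]
    exact Submodule.add_mem _ (Submodule.mem_sup_left (mem_spanS.2 ⟨x, rfl⟩))
      (Submodule.mem_sup_right (mem_spanS.2 ⟨x, rfl⟩))

/-- every principal right ideal is generated by an idempotent -/
lemma exists_idem_gen (hreg : ∀ a : R, ∃ x, a * x * a = a) (g : R) :
    ∃ e : R, e * e = e ∧
      Submodule.span Rᵐᵒᵖ ({e} : Set R) = Submodule.span Rᵐᵒᵖ ({g} : Set R) := by
  obtain ⟨x, hx⟩ := hreg g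
  refine ⟨g * x, ?_, le_antisymm (spanS_le.2 (mem_spanS.2 ⟨x, rfl⟩)) (spanS_le.2 ?_)⟩
  · rw [← mul_assoc, hx]
  · exact mem_spanS.2 ⟨g, by rw [hx]⟩

open Submodule
variable {R : Type*} [Ring R]

lemma proj_eq_mul {D D' : Submodule Rᵐᵒᵖ R} (h : IsCompl D D') (x : R) :
    (D.subtype.comp (Submodule.linearProjOfIsCompl D D' h)) x
      = ((D.subtype.comp (Submodule.linearProjOfIsCompl D D' h)) 1) * x := by
  set P := D.subtype.comp (Submodule.linearProjOfIsCompl D D' h)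
  have : x = (MulOpposite.op x) • (1 : R) := by simp
  rw [this, map_smul]
  simp [MulOpposite.smul_eq_mul_unop]

/-- a direct summand of `R` is a principal right ideal -/
lemma summand_principal {D D' : Submodule Rᵐᵒᵖ R} (h : IsCompl D D') :
    ∃ q : R, q * q = q ∧ D = Submodule.span Rᵐᵒᵖ ({q} : Set R) := by
  set P := D.subtype.comp (Submodule.linearProjOfIsCompl D D' h) with hP
  have hmem : ∀ x, P x ∈ D := fun x => (Submodule.linearProjOfIsCompl D D' h x).2
  have hid : ∀ x ∈ D, P x = x := fun x hx => by
    have := Submodule.linearProjOfIsCompl_apply_left h ⟨x, hx⟩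
    exact congrArg (D.subtype) this
  refine ⟨P 1, ?_, ?_⟩
  · have := proj_eq_mul h (P 1)
    rw [hid _ (hmem 1)] at this
    exact this.symm
  · apply le_antisymm
    · intro x hx
      have : P x = x := hid x hx
      rw [← this, proj_eq_mul h x]
      exact mem_spanS.2 ⟨x, rfl⟩
    · rw [spanS_le]; exact hmem 1

/-- sup of two principal right ideals is principal (in a regular ring) -/
lemma sup_principal (hreg : ∀ a : R, ∃ x, a * x * a = a) {A B : Submodule Rᵐᵒᵖ R}
    (hA : ∃ g, A = Submodule.span Rᵐᵒᵖ ({g} : Set R))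
    (hB : ∃ g, B = Submodule.span Rᵐᵒᵖ ({g} : Set R)) :
    ∃ g, A ⊔ B = Submodule.span Rᵐᵒᵖ ({g} : Set R) := by
  obtain ⟨g, rfl⟩ := hA
  obtain ⟨b, rfl⟩ := hB
  obtain ⟨e, he, hspan⟩ := exists_idem_gen hreg g
  rw [← hspan]
  obtain ⟨c, hc⟩ : ∃ c, c = b - e * b := ⟨_, rfl⟩
  have hsup : Submodule.span Rᵐᵒᵖ ({e} : Set R) ⊔ Submodule.span Rᵐᵒᵖ ({b} : Set R)
      = Submodule.span Rᵐᵒᵖ ({e} : Set R) ⊔ Submodule.span Rᵐᵒᵖ ({c} : Set R) := by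
    apply le_antisymm
    · apply sup_le le_sup_left
      rw [spanS_le]
      have : b = e * b + c := by rw [hc]; abel
      rw [this]
      exact Submodule.add_mem _ (Submodule.mem_sup_left (mem_spanS.2 ⟨b, rfl⟩))
        (Submodule.mem_sup_right self_mem_spanS)
    · apply sup_le le_sup_left
      rw [spanS_le, hc]
      exact Submodule.sub_mem _ (Submodule.mem_sup_right self_mem_spanS)
        (Submodule.mem_sup_left (mem_spanS.2 ⟨b, rfl⟩))
  rw [hsup]
  obtain ⟨y, hy⟩ := hreg c
  have hec : e * c = 0 := by rw [hc, mul_sub, ← mul_assoc, he, sub_self]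
  obtain ⟨f, hf⟩ : ∃ f, f = c * y * (1 - e) := ⟨_, rfl⟩
  have hcf : c * (y * (1 - e)) = f := by rw [hf, mul_assoc]
  have hfc : f * c = c := by
    rw [hf, mul_assoc, sub_mul, one_mul, hec, sub_zero]; exact hy
  have hff : f * f = f := by
    calc f * f = f * (c * (y * (1 - e))) := congrArg (f * ·) hcf.symm
    _ = (f * c) * (y * (1 - e)) := (mul_assoc _ _ _).symm
    _ = f := by rw [hfc, hcf]
  have hef : e * f = 0 := by
    rw [hf, ← mul_assoc, ← mul_assoc, hec, zero_mul, zero_mul]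
  have hfe : f * e = 0 := by
    rw [hf, mul_assoc, sub_mul, one_mul, he, sub_self, mul_zero]
  refine ⟨e + f, le_antisymm (sup_le (spanS_le.2 ?_) (spanS_le.2 ?_)) (spanS_le.2 ?_)⟩
  · exact mem_spanS.2 ⟨e, by rw [add_mul, he, hfe, add_zero]⟩
  · -- c ∈ span (e+f) : c = (e+f) * c
    exact mem_spanS.2 ⟨c, by rw [add_mul, hec, hfc, zero_add]⟩
  · -- e + f ∈ span e ⊔ span c : f = c * (y*(1-e))
    refine Submodule.add_mem _ (Submodule.mem_sup_left self_mem_spanS)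
      (Submodule.mem_sup_right (mem_spanS.2 ⟨y * (1-e), hcf.symm⟩))

lemma principal_isCompl (hreg : ∀ a : R, ∃ x, a * x * a = a) {A : Submodule Rᵐᵒᵖ R}
    (hA : ∃ g, A = Submodule.span Rᵐᵒᵖ ({g} : Set R)) : ∃ A', IsCompl A A' := by
  obtain ⟨g, rfl⟩ := hA
  obtain ⟨e, he, hspan⟩ := exists_idem_gen hreg g
  exact ⟨_, hspan ▸ idem_isCompl he⟩

lemma sup_cancel_right {A T T' : Submodule Rᵐᵒᵖ R} (hAT : A ≤ T) (hdis : T ⊓ T' = ⊥)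
    {y : R} (hy1 : y ∈ A ⊔ T') (hy2 : y ∈ T) : y ∈ A := by
  obtain ⟨a, ha, t, ht, rfl⟩ := Submodule.mem_sup.1 hy1
  have h1 : t ∈ T ⊓ T' := ⟨by simpa using Submodule.sub_mem T hy2 (hAT ha), ht⟩
  rw [hdis, Submodule.mem_bot] at h1
  simpa [h1] using ha

lemma compl_combine {K K₂ B Bc : Submodule Rᵐᵒᵖ R} (hK : K ≤ B) (hK₂ : K₂ ≤ B)
    (hsup : K ⊔ K₂ = B) (hinf : K ⊓ K₂ = ⊥) (hB : IsCompl B Bc) :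
    IsCompl K (K₂ ⊔ Bc) := by
  constructor
  · rw [disjoint_iff, eq_bot_iff]
    rintro x ⟨hx1, hx2⟩
    have : x ∈ K₂ := sup_cancel_right hK₂ (by rw [← disjoint_iff]; exact hB.disjoint) hx2 (hK hx1)
    rw [← hinf]; exact ⟨hx1, this⟩
  · rw [codisjoint_iff, ← sup_assoc, hsup, codisjoint_iff.1 hB.codisjoint]

/-- the intersection of two principal right ideals is a direct summand -/
lemma inf_summand (hreg : ∀ a : R, ∃ x, a * x * a = a) {A B : Submodule Rᵐᵒᵖ R}
    (hA : ∃ g, A = Submodule.span Rᵐᵒᵖ ({g} : Set R))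
    (hB : ∃ g, B = Submodule.span Rᵐᵒᵖ ({g} : Set R)) :
    ∃ W, IsCompl (A ⊓ B) W := by
  obtain ⟨T', hT'⟩ := principal_isCompl hreg (sup_principal hreg hA hB)
  obtain ⟨Ac, hAc⟩ := principal_isCompl hreg hA
  obtain ⟨Bc, hBc⟩ := principal_isCompl hreg hB
  set T := A ⊔ B with hTdef
  set D := Ac ⊓ T with hDdef
  have hDT : D ≤ T := inf_le_right
  have hAD_inf : A ⊓ D = ⊥ := by
    rw [eq_bot_iff]
    rintro x ⟨hx1, hx2, _⟩
    rw [← disjoint_iff.1 hAc.disjoint]; exact ⟨hx1, hx2⟩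
  have hAD_sup : A ⊔ D = T := by
    rw [hDdef, sup_comm, inf_comm, inf_sup_assoc_of_le _ le_sup_left, sup_comm Ac A,
      codisjoint_iff.1 hAc.codisjoint, inf_top_eq]
  have hD : IsCompl D (A ⊔ T') := by
    constructor
    · rw [disjoint_iff, eq_bot_iff]
      rintro x ⟨hx1, hx2⟩
      have hxA : x ∈ A := sup_cancel_right le_sup_left (disjoint_iff.1 hT'.disjoint) hx2 (hDT hx1)
      rw [← hAD_inf]; exact ⟨hxA, hx1⟩
    · rw [codisjoint_iff, ← sup_assoc, sup_comm D A, hAD_sup, codisjoint_iff.1 hT'.codisjoint]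
  -- projection onto D along A ⊔ T'
  set P := D.subtype.comp (Submodule.linearProjOfIsCompl D (A ⊔ T') hD) with hPdef
  have hmem : ∀ x, P x ∈ D := fun x => (Submodule.linearProjOfIsCompl D (A ⊔ T') hD x).2
  have hid : ∀ x ∈ D, P x = x := fun x hx => by
    have := Submodule.linearProjOfIsCompl_apply_left hD ⟨x, hx⟩
    exact congrArg D.subtype this
  have hker : ∀ x ∈ A ⊔ T', P x = 0 := fun x hx => by
    have := Submodule.linearProjOfIsCompl_apply_right' hD hx
    simp [hPdef]; exact this
  have hq : ∀ x, P x = P 1 * x := proj_eq_mul hD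
  set q := P 1 with hqdef
  have hqD : q ∈ D := hmem 1
  have hqq : q * q = q := by rw [← hq q, hid q hqD]
  -- write q = a₀ + t with a₀ ∈ A, t ∈ B
  obtain ⟨a₀, ha₀, t, htB, hsum⟩ := Submodule.mem_sup.1 (hDT hqD)
  have hPt : q * t = q := by
    have h1 : P a₀ = 0 := hker a₀ (Submodule.mem_sup_left ha₀)
    have h2 : P q = q := hid q hqD
    have : P t = P q - P a₀ := by rw [← map_sub]; congr 1; rw [← hsum]; abel
    rw [hq t] at this
    rw [this, h1, h2, sub_zero]
  set t₁ := t * q with ht₁def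
  have ht₁B : t₁ ∈ B := Submodule.smul_mem B (MulOpposite.op q) htB
  have hqt₁ : q * t₁ = q := by rw [ht₁def, ← mul_assoc, hPt, hqq]
  set K := A ⊓ B with hKdef
  set K₂ := Submodule.span Rᵐᵒᵖ ({t₁} : Set R) with hK₂def
  have hK₂B : K₂ ≤ B := spanS_le.2 ht₁B
  have hinf : K ⊓ K₂ = ⊥ := by
    rw [eq_bot_iff]
    rintro x ⟨⟨hxA, hxB⟩, hxK₂⟩
    obtain ⟨r, rfl⟩ := mem_spanS.1 hxK₂
    have h0 : P (t₁ * r) = 0 := hker _ (Submodule.mem_sup_left hxA)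
    rw [hq, ← mul_assoc, hqt₁] at h0
    rw [Submodule.mem_bot, ht₁def, mul_assoc, h0, mul_zero]
  have hsup : K ⊔ K₂ = B := by
    apply le_antisymm (sup_le inf_le_right hK₂B)
    intro x hxB
    have hd : x = (x - t₁ * (q * x)) + t₁ * (q * x) := by abel
    rw [hd]
    refine Submodule.add_mem _ (Submodule.mem_sup_left ?_) (Submodule.mem_sup_right (mem_spanS.2 ⟨q * x, rfl⟩))
    have hyB : x - t₁ * (q * x) ∈ B := Submodule.sub_mem B hxB
      (Submodule.smul_mem B (MulOpposite.op (q * x)) ht₁B)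
    have hP0 : P (x - t₁ * (q * x)) = 0 := by
      rw [map_sub, hq x, hq (t₁ * (q * x)), ← mul_assoc, hqt₁, ← mul_assoc, hqq, sub_self]
    have hyker : x - t₁ * (q * x) ∈ A ⊔ T' := by
      have := Submodule.linearProjOfIsCompl_apply_eq_zero_iff hD
        (x := x - t₁ * (q * x))
      apply this.1
      have : D.subtype (Submodule.linearProjOfIsCompl D (A ⊔ T') hD (x - t₁ * (q * x))) = 0 := hP0
      exact Subtype.ext this
    exact ⟨sup_cancel_right le_sup_left (disjoint_iff.1 hT'.disjoint) hyker
      (Submodule.mem_sup_right hyB), hyB⟩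
  exact ⟨K₂ ⊔ Bc, compl_combine inf_le_right hK₂B hsup hinf hBc⟩

section Abstract
variable {T : Type*} [Ring T] {S M N : Type*}
  [AddCommGroup S] [Module T S] [AddCommGroup M] [Module T M] [AddCommGroup N] [Module T N]

lemma fst_apply_eq {f : (S × M) ≃ₗ[T] (S × N)} (s : S) (m : M) :
    (f (s, m)).1 = (f (s, 0)).1 + (f (0, m)).1 := by
  have : (s, m) = (s, (0 : M)) + ((0 : S), m) := by simp
  rw [this, map_add]; rfl

lemma schur_cancel (f : (S × M) ≃ₗ[T] (S × N))
    (hα : Function.Bijective fun s : S => (f (s, 0)).1) : Nonempty (M ≃ₗ[T] N) := by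
  classical
  set α : S →ₗ[T] S := (LinearMap.fst T S N).comp (f.toLinearMap.comp (LinearMap.inl T S M))
    with hαdef
  have hαa : ∀ s, α s = (f (s, 0)).1 := fun s => rfl
  have hαb : Function.Bijective α := hα
  set αe := LinearEquiv.ofBijective α hαb with hαe
  have hαe_app : ∀ s, αe s = α s := fun s => rfl
  set β : M →ₗ[T] S := (LinearMap.fst T S N).comp (f.toLinearMap.comp (LinearMap.inr T S M))
    with hβdef
  have hβa : ∀ m, β m = (f (0, m)).1 := fun m => rfl
  -- u₁ : (s, m) ↦ (s - αe⁻¹ (β m), m)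
  set u₁f : (S × M) →ₗ[T] (S × M) :=
    LinearMap.prod (LinearMap.fst T S M - αe.symm.toLinearMap.comp (β.comp (LinearMap.snd T S M)))
      (LinearMap.snd T S M) with hu₁f
  set u₁g : (S × M) →ₗ[T] (S × M) :=
    LinearMap.prod (LinearMap.fst T S M + αe.symm.toLinearMap.comp (β.comp (LinearMap.snd T S M)))
      (LinearMap.snd T S M) with hu₁g
  have hufg : ∀ p : S × M, u₁f (u₁g p) = p := by
    rintro ⟨s, m⟩
    simp [hu₁f, hu₁g, LinearMap.prod_apply]
  have hugf : ∀ p : S × M, u₁g (u₁f p) = p := by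
    rintro ⟨s, m⟩
    simp [hu₁f, hu₁g, LinearMap.prod_apply]
  set u₁ : (S × M) ≃ₗ[T] (S × M) :=
    LinearEquiv.ofLinear u₁f u₁g (LinearMap.ext hufg) (LinearMap.ext hugf) with hu₁
  -- u₂ : (s, n) ↦ (s, n - γ (αe⁻¹ s)) where γ s = (f (s,0)).2
  set γ : S →ₗ[T] N := (LinearMap.snd T S N).comp (f.toLinearMap.comp (LinearMap.inl T S M))
    with hγdef
  set u₂f : (S × N) →ₗ[T] (S × N) :=
    LinearMap.prod (LinearMap.fst T S N)
      (LinearMap.snd T S N - γ.comp (αe.symm.toLinearMap.comp (LinearMap.fst T S N))) with hu₂f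
  set u₂g : (S × N) →ₗ[T] (S × N) :=
    LinearMap.prod (LinearMap.fst T S N)
      (LinearMap.snd T S N + γ.comp (αe.symm.toLinearMap.comp (LinearMap.fst T S N))) with hu₂g
  have hufg2 : ∀ p : S × N, u₂f (u₂g p) = p := by
    rintro ⟨s, n⟩; simp [hu₂f, hu₂g, LinearMap.prod_apply]
  have hugf2 : ∀ p : S × N, u₂g (u₂f p) = p := by
    rintro ⟨s, n⟩; simp [hu₂f, hu₂g, LinearMap.prod_apply]
  set u₂ : (S × N) ≃ₗ[T] (S × N) :=
    LinearEquiv.ofLinear u₂f u₂g (LinearMap.ext hufg2) (LinearMap.ext hugf2) with hu₂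
  set E := u₁.trans (f.trans u₂) with hE
  have key : ∀ p : S × M, (E p).1 = α p.1 := by
    rintro ⟨s, m⟩
    have h1 : u₁ (s, m) = (s - αe.symm (β m), m) := rfl
    have h2 : ∀ p : S × N, (u₂ p).1 = p.1 := fun p => rfl
    have h3 : (E (s, m)).1 = (f (s - αe.symm (β m), m)).1 := by
      rw [hE]; rfl
    have hαsymm : ∀ x, α (αe.symm x) = x := fun x => αe.apply_symm_apply x
    rw [h3, fst_apply_eq, ← hαa, ← hβa, map_sub, hαsymm]
    simp
  set hmap : M →ₗ[T] N := (LinearMap.snd T S N).comp (E.toLinearMap.comp (LinearMap.inr T S M))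
    with hhmap
  have hmap_app : ∀ m, hmap m = (E (0, m)).2 := fun m => rfl
  have hfst : ∀ m : M, (E (0, m)).1 = 0 := by
    intro m; rw [key]; simp
  have hinj : Function.Injective hmap := by
    rw [← LinearMap.ker_eq_bot, eq_bot_iff]
    intro m hm
    rw [LinearMap.mem_ker, hmap_app] at hm
    have : E (0, m) = E (0, 0) := by
      ext
      · rw [hfst]; simp [hfst]
      · rw [hm]; exact (congrArg Prod.snd (map_zero E)).symm
    have := E.injective this
    simpa using congrArg Prod.snd this
  have hsurj : Function.Surjective hmap := by
    intro n
    set p := E.symm (0, n) with hp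
    have hEp : E p = (0, n) := E.apply_symm_apply _
    have h1 : α p.1 = 0 := by rw [← key, hEp]
    have h10 : p.1 = 0 := by
      have := hαb.injective (a₂ := 0) (by rw [h1, map_zero])
      exact this
    refine ⟨p.2, ?_⟩
    rw [hmap_app, ← h10]
    have hpp : (p.1, p.2) = p := rfl
    rw [hpp, hEp]
  exact ⟨LinearEquiv.ofBijective hmap ⟨hinj, hsurj⟩⟩

end Abstract

section Abstract2
variable {T : Type*} [Ring T] {S M N : Type*}
  [AddCommGroup S] [Module T S] [AddCommGroup M] [Module T M] [AddCommGroup N] [Module T N]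

/-- cancellation of a module all of whose nonzero endomorphisms are invertible -/
lemma simple_cancel (f : (S × M) ≃ₗ[T] (S × N))
    (hS : ∀ g : S →ₗ[T] S, g ≠ 0 → Function.Bijective g) : Nonempty (M ≃ₗ[T] N) := by
  classical
  by_cases hb : Function.Bijective fun s : S => (f (s, 0)).1
  · exact schur_cancel f hb
  set α : S →ₗ[T] S := (LinearMap.fst T S N).comp (f.toLinearMap.comp (LinearMap.inl T S M))
    with hαdef
  have hαa : ∀ s, α s = (f (s, 0)).1 := fun s => rfl
  set γ : S →ₗ[T] N := (LinearMap.snd T S N).comp (f.toLinearMap.comp (LinearMap.inl T S M))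
    with hγdef
  have hγa : ∀ s, γ s = (f (s, 0)).2 := fun s => rfl
  set α' : S →ₗ[T] S :=
    (LinearMap.fst T S M).comp (f.symm.toLinearMap.comp (LinearMap.inl T S N)) with hα'def
  set γ' : N →ₗ[T] S :=
    (LinearMap.fst T S M).comp (f.symm.toLinearMap.comp (LinearMap.inr T S N)) with hγ'def
  have hid : ∀ s : S, α' (α s) + γ' (γ s) = s := by
    intro s
    have h0 : f.symm (f (s, 0)) = (s, 0) := f.symm_apply_apply _
    have h1 : ((f (s, 0)).1, (f (s, 0)).2) = f (s, 0) := rfl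
    have h2 : (((f (s,0)).1 : S), ((0 : N))) + ((0 : S), (f (s,0)).2) = f (s, 0) := by
      rw [← h1]; simp
    have h3 : f.symm ((((f (s,0)).1 : S), ((0 : N))) + ((0 : S), (f (s,0)).2)) = (s, 0) := by
      rw [h2, h0]
    rw [map_add] at h3
    have := congrArg Prod.fst h3
    simpa [hα'def, hγ'def, hαa, hγa] using this
  -- α'∘α = 0, hence γ'∘γ = id
  have hαα : α'.comp α = 0 := by
    by_contra hne
    have hbij : Function.Bijective (α'.comp α) := hS _ hne
    have hαne : α ≠ 0 := fun h0 => hne (by rw [h0, LinearMap.comp_zero])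
    have : Function.Bijective α := hS α hαne
    exact hb this
  have hγγ : ∀ s, γ' (γ s) = s := by
    intro s
    have := hid s
    have h0 : α' (α s) = 0 := by
      have : (α'.comp α) s = (0 : S →ₗ[T] S) s := by rw [hαα]
      simpa using this
    rwa [h0, zero_add] at this
  -- the involution τ (s, n) = (γ' n, γ s + n - γ (γ' n))
  set τ₀ : (S × N) →ₗ[T] (S × N) :=
    LinearMap.prod (γ'.comp (LinearMap.snd T S N))
      (γ.comp (LinearMap.fst T S N) + LinearMap.snd T S N
        - γ.comp (γ'.comp (LinearMap.snd T S N))) with hτ₀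
  have hτa : ∀ p : S × N, τ₀ p = (γ' p.2, γ p.1 + p.2 - γ (γ' p.2)) := fun p => rfl
  have hττ : ∀ p : S × N, τ₀ (τ₀ p) = p := by
    rintro ⟨s, n⟩
    rw [hτa, hτa]
    have h1 : γ' (γ s + n - γ (γ' n)) = s + γ' n - γ' n := by
      rw [map_sub, map_add, hγγ, hγγ]
    rw [h1]
    ext
    · simp
    · simp only []
      have : s + γ' n - γ' n = s := by abel
      rw [this]
      abel
  set τ : (S × N) ≃ₗ[T] (S × N) :=
    LinearEquiv.ofLinear τ₀ τ₀ (LinearMap.ext hττ) (LinearMap.ext hττ) with hτ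
  have hτap : ∀ p : S × N, τ p = τ₀ p := fun p => rfl
  apply schur_cancel (f.trans τ)
  have : (fun s : S => ((f.trans τ) (s, 0)).1) = fun s => s := by
    funext s
    have h1 : (f.trans τ) (s, 0) = τ (f (s, 0)) := rfl
    rw [h1, hτap, hτa]
    exact hγγ s
  rw [this]
  exact Function.bijective_id

/-- product with a trivial module -/
lemma triv_prod (hS : Subsingleton S) : Nonempty ((S × M) ≃ₗ[T] M) := by
  refine ⟨LinearEquiv.ofLinear (LinearMap.snd T S M) (LinearMap.inr T S M)
    (LinearMap.ext fun m => rfl) (LinearMap.ext fun p => ?_)⟩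
  obtain ⟨s, m⟩ := p
  simp only [LinearMap.coe_comp, Function.comp_apply, LinearMap.snd_apply, LinearMap.inr_apply,
    LinearMap.id_coe, id_eq]
  ext
  · exact Subsingleton.elim _ _
  · rfl

end Abstract2

/-- internal direct sum gives a product decomposition -/
lemma internalProd {S A₁ A : Submodule Rᵐᵒᵖ R} (hsup : S ⊔ A₁ = A) (hinf : S ⊓ A₁ = ⊥) :
    Nonempty (↥A ≃ₗ[Rᵐᵒᵖ] ↥S × ↥A₁) := by
  have hSA : S ≤ A := hsup ▸ le_sup_left
  have hA₁A : A₁ ≤ A := hsup ▸ le_sup_right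
  set g : (↥S × ↥A₁) →ₗ[Rᵐᵒᵖ] ↥A :=
    (Submodule.inclusion hSA).comp (LinearMap.fst _ _ _)
      + (Submodule.inclusion hA₁A).comp (LinearMap.snd _ _ _) with hg
  have hga : ∀ p : ↥S × ↥A₁, (g p : R) = (p.1 : R) + (p.2 : R) := fun p => rfl
  have hbij : Function.Bijective g := by
    constructor
    · rintro ⟨s, a⟩ ⟨s', a'⟩ h
      have h1 : (s : R) + a = (s' : R) + a' := by
        have := congrArg (Subtype.val) h
        rwa [hga, hga] at this
      have h2 : (s : R) - s' = (a' : R) - a := by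
        have : (s : R) + a - ((s' : R) + a') = 0 := by rw [h1]; abel
        have h3 : ((s : R) - s') - ((a' : R) - a) = 0 := by rw [← this]; abel
        have := sub_eq_zero.1 h3
        exact this
      have hmem : (s : R) - s' ∈ S ⊓ A₁ := by
        constructor
        · exact Submodule.sub_mem S s.2 s'.2
        · rw [h2]; exact Submodule.sub_mem A₁ a'.2 a.2
      rw [hinf, Submodule.mem_bot, sub_eq_zero] at hmem
      have hs : s = s' := Subtype.ext hmem
      have ha : a = a' := by
        apply Subtype.ext
        have := h2
        rw [hmem, sub_self] at this
        have := (sub_eq_zero.1 this.symm)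
        exact this.symm
      rw [hs, ha]
    · rintro ⟨x, hx⟩
      rw [← hsup] at hx
      obtain ⟨s, hs, a, ha, heq⟩ := Submodule.mem_sup.1 hx
      exact ⟨(⟨s, hs⟩, ⟨a, ha⟩), Subtype.ext heq⟩
  exact ⟨(LinearEquiv.ofBijective g hbij).symm⟩

/-- below any nonzero principal right ideal of finite height there is a minimal one -/
lemma exists_atom : ∀ n : ℕ, ∀ X : Submodule Rᵐᵒᵖ R,
    (∀ l : List (Submodule Rᵐᵒᵖ R), l.Chain' (· < ·) →
      (∀ Y ∈ l, (∃ g, Y = Submodule.span Rᵐᵒᵖ ({g} : Set R)) ∧ Y ≤ X) → l.length ≤ n) →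
    ∀ W : Submodule Rᵐᵒᵖ R, (∃ g, W = Submodule.span Rᵐᵒᵖ ({g} : Set R)) → W ≠ ⊥ → W ≤ X →
    ∃ S : Submodule Rᵐᵒᵖ R, (∃ g, S = Submodule.span Rᵐᵒᵖ ({g} : Set R)) ∧ S ≠ ⊥ ∧ S ≤ W ∧
      (∀ Y : Submodule Rᵐᵒᵖ R, (∃ g, Y = Submodule.span Rᵐᵒᵖ ({g} : Set R)) →
        Y ≤ S → Y ≠ ⊥ → Y = S) := by
  intro n
  induction n with
  | zero =>
    intro X hb W _ _ _
    exfalso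
    have := hb [⊥] (List.isChain_singleton _)
      (by rintro Y hY
          simp only [List.mem_singleton] at hY
          subst hY
          exact ⟨⟨0, by rw [Submodule.span_zero_singleton]⟩, bot_le⟩)
    simp at this
  | succ n ih =>
    intro X hb W hWp hWne hWX
    by_cases hmin : ∀ Y : Submodule Rᵐᵒᵖ R, (∃ g, Y = Submodule.span Rᵐᵒᵖ ({g} : Set R)) →
        Y ≤ W → Y ≠ ⊥ → Y = W
    · exact ⟨W, hWp, hWne, le_refl W, hmin⟩
    · push_neg at hmin
      obtain ⟨Y, hYp, hYW, hYne, hYneW⟩ := hmin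
      have hYlt : Y < W := lt_of_le_of_ne hYW hYneW
      -- chains below Y are bounded by n
      have hbY : ∀ l : List (Submodule Rᵐᵒᵖ R), l.Chain' (· < ·) →
          (∀ Z ∈ l, (∃ g, Z = Submodule.span Rᵐᵒᵖ ({g} : Set R)) ∧ Z ≤ Y) → l.length ≤ n := by
        intro l hc hmem
        have hchain : (l ++ [W]).Chain' (· < ·) := by
          rw [List.Chain', List.isChain_append]
          refine ⟨hc, List.isChain_singleton _, ?_⟩
          intro x hx y hy
          simp only [List.head?_cons, Option.mem_def, Option.some.injEq] at hy
          subst hy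
          obtain ⟨hne, hxl⟩ := List.mem_getLast?_eq_getLast hx
          exact lt_of_le_of_lt ((hmem x (hxl ▸ List.getLast_mem hne)).2) hYlt
        have hmem' : ∀ Z ∈ l ++ [W], (∃ g, Z = Submodule.span Rᵐᵒᵖ ({g} : Set R)) ∧ Z ≤ X := by
          intro Z hZ
          rcases List.mem_append.1 hZ with h | h
          · exact ⟨(hmem Z h).1, le_trans (hmem Z h).2 (le_trans hYW hWX)⟩
          · simp only [List.mem_singleton] at h
            subst h
            exact ⟨hWp, hWX⟩
        have := hb (l ++ [W]) hchain hmem'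
        simp only [List.length_append, List.length_singleton] at this
        omega
      obtain ⟨S, h1, h2, h3, h4⟩ := ih Y hbY Y hYp hYne (le_refl Y)
      exact ⟨S, h1, h2, le_trans h3 hYW, h4⟩

/-- a minimal nonzero principal right ideal is a simple module: all nonzero
endomorphisms are bijective -/
lemma atom_simple {S : Submodule Rᵐᵒᵖ R} (hSne : S ≠ ⊥)
    (hmin : ∀ Y : Submodule Rᵐᵒᵖ R, (∃ g, Y = Submodule.span Rᵐᵒᵖ ({g} : Set R)) →
      Y ≤ S → Y ≠ ⊥ → Y = S)
    (g : ↥S →ₗ[Rᵐᵒᵖ] ↥S) (hg : g ≠ 0) : Function.Bijective g := by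
  have hsub : ∀ W : Submodule Rᵐᵒᵖ ↥S, W = ⊥ ∨ W = ⊤ := by
    intro W
    by_cases hW : W = ⊥
    · exact Or.inl hW
    right
    obtain ⟨x, hxW, hxne⟩ := W.ne_bot_iff.1 hW
    have hxne' : (x : R) ≠ 0 := fun h => hxne (Subtype.ext h)
    have hspan : Submodule.span Rᵐᵒᵖ ({(x : R)} : Set R) = S := by
      apply hmin _ ⟨_, rfl⟩ (spanS_le.2 x.2)
      rw [Submodule.ne_bot_iff]
      exact ⟨(x : R), self_mem_spanS, hxne'⟩
    rw [eq_top_iff]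
    intro y _
    have : (y : R) ∈ Submodule.span Rᵐᵒᵖ ({(x : R)} : Set R) := by rw [hspan]; exact y.2
    obtain ⟨r, hr⟩ := mem_spanS.1 this
    have : y = (MulOpposite.op r) • x := by
      apply Subtype.ext
      rw [hr]
      rfl
    rw [this]
    exact W.smul_mem _ hxW
  constructor
  · rw [← LinearMap.ker_eq_bot]
    rcases hsub (LinearMap.ker g) with h | h
    · exact h
    · exact absurd (LinearMap.ker_eq_top.1 h) hg
  · rw [← LinearMap.range_eq_top]
    rcases hsub (LinearMap.range g) with h | h
    · exact absurd (LinearMap.range_eq_bot.1 h) hg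
    · exact h

lemma sup_lt_sup_strict {S Y Z : Submodule Rᵐᵒᵖ R} (h : Y < Z) (hZS : Z ⊓ S = ⊥) :
    Y ⊔ S < Z ⊔ S := by
  refine lt_of_le_of_ne (sup_le_sup_right h.le S) ?_
  intro heq
  have h1 : Z ≤ Y ⊔ S := heq ▸ le_sup_left
  have h2 : (Y ⊔ S) ⊓ Z = Y ⊔ S ⊓ Z := sup_inf_assoc_of_le S h.le
  have h3 : (Y ⊔ S) ⊓ Z = Z := inf_eq_right.2 h1
  rw [h3, inf_comm S Z, hZS, sup_bot_eq] at h2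
  exact h.ne' h2

lemma chain_sup_map {S X₁ : Submodule Rᵐᵒᵖ R} (hd : X₁ ⊓ S = ⊥) :
    ∀ l : List (Submodule Rᵐᵒᵖ R), l.Chain' (· < ·) → (∀ Y ∈ l, Y ≤ X₁) →
      (l.map (· ⊔ S)).Chain' (· < ·) := by
  intro l
  induction l with
  | nil => intro _ _; simp [List.Chain']
  | cons a l ih =>
    intro hc hmem
    rw [List.Chain', List.isChain_cons] at hc
    rw [List.map_cons, List.Chain', List.isChain_cons]
    constructor
    · intro y hy
      rw [List.head?_map] at hy
      obtain ⟨z, hz, rfl⟩ := Option.map_eq_some_iff.1 hy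
      have hzl : z ∈ l := List.mem_of_mem_head? hz
      have haz : a < z := hc.1 z hz
      have hzX : z ≤ X₁ := hmem z (List.mem_cons_of_mem _ hzl)
      exact sup_lt_sup_strict haz (eq_bot_iff.2 (hd ▸ inf_le_inf_right S hzX))
    · exact ih hc.2 (fun Y hY => hmem Y (List.mem_cons_of_mem _ hY))

lemma bot_subsingleton : Subsingleton (↥(⊥ : Submodule Rᵐᵒᵖ R)) := by
  constructor
  rintro ⟨a, ha⟩ ⟨b, hb⟩
  rw [Submodule.mem_bot] at ha hb
  exact Subtype.ext (ha.trans hb.symm)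

/-- cancellation of a finite-height direct factor -/
lemma cancel_fin (hreg : ∀ a : R, ∃ x, a * x * a = a) {M N : Type*}
    [AddCommGroup M] [Module Rᵐᵒᵖ M] [AddCommGroup N] [Module Rᵐᵒᵖ N] :
    ∀ n : ℕ, ∀ X : Submodule Rᵐᵒᵖ R,
    (∀ l : List (Submodule Rᵐᵒᵖ R), l.Chain' (· < ·) →
      (∀ Y ∈ l, (∃ g, Y = Submodule.span Rᵐᵒᵖ ({g} : Set R)) ∧ Y ≤ X) → l.length ≤ n) →
    ((↥X × M) ≃ₗ[Rᵐᵒᵖ] (↥X × N)) → Nonempty (M ≃ₗ[Rᵐᵒᵖ] N) := by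
  intro n
  induction n with
  | zero =>
    intro X hb _
    exfalso
    have := hb [⊥] (List.isChain_singleton _)
      (by rintro Y hY
          simp only [List.mem_singleton] at hY
          subst hY
          exact ⟨⟨0, by rw [Submodule.span_zero_singleton]⟩, bot_le⟩)
    simp at this
  | succ n ih =>
    intro X hb f
    by_cases hX : X = ⊥
    · subst hX
      have : Subsingleton (↥(⊥ : Submodule Rᵐᵒᵖ R)) := bot_subsingleton
      obtain ⟨tM⟩ := triv_prod (M := M) (T := Rᵐᵒᵖ) this
      obtain ⟨tN⟩ := triv_prod (M := N) (T := Rᵐᵒᵖ) this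
      exact ⟨tM.symm.trans (f.trans tN)⟩
    · -- find an atom S ≤ X
      obtain ⟨x, hxX, hxne⟩ := X.ne_bot_iff.1 hX
      obtain ⟨S, hSp, hSne, hSX', hSmin⟩ := exists_atom (n + 1) X hb
        (Submodule.span Rᵐᵒᵖ ({x} : Set R)) ⟨x, rfl⟩
        (by rw [Submodule.ne_bot_iff]; exact ⟨x, self_mem_spanS, hxne⟩)
        (spanS_le.2 hxX)
      have hSX : S ≤ X := le_trans hSX' (spanS_le.2 hxX)
      obtain ⟨Sc, hSc⟩ := principal_isCompl hreg hSp
      set X₁ := Sc ⊓ X with hX₁def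
      have hsup : S ⊔ X₁ = X := by
        rw [hX₁def, sup_comm, inf_comm Sc X, inf_sup_assoc_of_le _ hSX, sup_comm Sc S,
          codisjoint_iff.1 hSc.codisjoint, inf_top_eq]
      have hinf : S ⊓ X₁ = ⊥ := by
        rw [eq_bot_iff]
        rintro y ⟨hy1, hy2, _⟩
        rw [← disjoint_iff.1 hSc.disjoint]
        exact ⟨hy1, hy2⟩
      have hX₁X : X₁ ≤ X := inf_le_right
      -- chains below X₁ are bounded by n
      have hbX₁ : ∀ l : List (Submodule Rᵐᵒᵖ R), l.Chain' (· < ·) →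
          (∀ Y ∈ l, (∃ g, Y = Submodule.span Rᵐᵒᵖ ({g} : Set R)) ∧ Y ≤ X₁) →
          l.length ≤ n := by
        intro l hc hmem
        have hX₁S : X₁ ⊓ S = ⊥ := by rw [inf_comm]; exact hinf
        set l' := (⊥ : Submodule Rᵐᵒᵖ R) :: l.map (· ⊔ S) with hl'
        have hc' : l'.Chain' (· < ·) := by
          rw [hl', List.Chain', List.isChain_cons]
          constructor
          · intro y hy
            rw [List.head?_map] at hy
            obtain ⟨z, hz, rfl⟩ := Option.map_eq_some_iff.1 hy
            have : S ≤ z ⊔ S := le_sup_right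
            refine bot_lt_iff_ne_bot.2 fun h0 => hSne ?_
            rw [eq_bot_iff, ← h0]
            exact this
          · exact chain_sup_map hX₁S l hc (fun Y hY => (hmem Y hY).2)
        have hmem' : ∀ Z ∈ l', (∃ g, Z = Submodule.span Rᵐᵒᵖ ({g} : Set R)) ∧ Z ≤ X := by
          intro Z hZ
          rw [hl', List.mem_cons] at hZ
          rcases hZ with h | h
          · subst h
            exact ⟨⟨0, by rw [Submodule.span_zero_singleton]⟩, bot_le⟩
          · rw [List.mem_map] at h
            obtain ⟨Y, hYl, rfl⟩ := h
            exact ⟨sup_principal hreg (hmem Y hYl).1 hSp,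
              sup_le (le_trans (hmem Y hYl).2 hX₁X) hSX⟩
        have := hb l' hc' hmem'
        rw [hl'] at this
        simp only [List.length_cons, List.length_map] at this
        omega
      -- decompose and cancel the simple atom S
      obtain ⟨eX⟩ := internalProd hsup hinf
      set g1 : ((↥S × ↥X₁) × M) ≃ₗ[Rᵐᵒᵖ] (↥X × M) :=
        eX.symm.prodCongr (LinearEquiv.refl Rᵐᵒᵖ M) with hg1
      set h1 : ((↥S × ↥X₁) × N) ≃ₗ[Rᵐᵒᵖ] (↥X × N) :=
        eX.symm.prodCongr (LinearEquiv.refl Rᵐᵒᵖ N) with hh1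
      set big : (↥S × (↥X₁ × M)) ≃ₗ[Rᵐᵒᵖ] (↥S × (↥X₁ × N)) :=
        (LinearEquiv.prodAssoc Rᵐᵒᵖ ↥S ↥X₁ M).symm.trans
          (g1.trans (f.trans (h1.symm.trans (LinearEquiv.prodAssoc Rᵐᵒᵖ ↥S ↥X₁ N)))) with hbig
      obtain ⟨f₁⟩ := simple_cancel big (atom_simple hSne hSmin)
      exact ih X₁ hbX₁ f₁

lemma compl_within {S A Sc : Submodule Rᵐᵒᵖ R} (hSA : S ≤ A) (hSc : IsCompl S Sc) :
    S ⊔ (Sc ⊓ A) = A ∧ S ⊓ (Sc ⊓ A) = ⊥ := by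
  constructor
  · rw [sup_comm, inf_comm Sc A, inf_sup_assoc_of_le _ hSA, sup_comm Sc S,
      codisjoint_iff.1 hSc.codisjoint, inf_top_eq]
  · rw [eq_bot_iff]
    rintro y ⟨hy1, hy2, _⟩
    rw [← disjoint_iff.1 hSc.disjoint]
    exact ⟨hy1, hy2⟩

/-- main lemma: isomorphic principal right ideals with finite-height intersection
have a common (principal) complement -/
lemma common_compl (hreg : ∀ a : R, ∃ x, a * x * a = a) {A B : Submodule Rᵐᵒᵖ R}
    (hA : ∃ g, A = Submodule.span Rᵐᵒᵖ ({g} : Set R))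
    (hB : ∃ g, B = Submodule.span Rᵐᵒᵖ ({g} : Set R)) {n : ℕ}
    (hfin : ∀ l : List (Submodule Rᵐᵒᵖ R), l.Chain' (· < ·) →
      (∀ Y ∈ l, (∃ g, Y = Submodule.span Rᵐᵒᵖ ({g} : Set R)) ∧ Y ≤ A ⊓ B) → l.length ≤ n)
    (φ : ↥A ≃ₗ[Rᵐᵒᵖ] ↥B) :
    ∃ C : Submodule Rᵐᵒᵖ R, (∃ g, C = Submodule.span Rᵐᵒᵖ ({g} : Set R)) ∧
      IsCompl A C ∧ IsCompl B C := by
  classical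
  obtain ⟨Xc, hXc⟩ := inf_summand hreg hA hB
  set X := A ⊓ B with hXdef
  have hXA : X ≤ A := inf_le_left
  have hXB : X ≤ B := inf_le_right
  set A' := Xc ⊓ A with hA'def
  set B' := Xc ⊓ B with hB'def
  obtain ⟨hsupA, hinfA⟩ := compl_within hXA hXc
  obtain ⟨hsupB, hinfB⟩ := compl_within hXB hXc
  have hA'A : A' ≤ A := inf_le_right
  have hB'B : B' ≤ B := inf_le_right
  have hA'Xc : A' ≤ Xc := inf_le_left
  have hB'Xc : B' ≤ Xc := inf_le_left
  have hXXc : X ⊓ Xc = ⊥ := disjoint_iff.1 hXc.disjoint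
  obtain ⟨eA⟩ := internalProd hsupA hinfA
  obtain ⟨eB⟩ := internalProd hsupB hinfB
  have F : (↥X × ↥A') ≃ₗ[Rᵐᵒᵖ] (↥X × ↥B') := eA.symm.trans (φ.trans eB)
  obtain ⟨ψ⟩ := cancel_fin hreg n X hfin F
  -- the graph of ψ
  set dmap : ↥A' →ₗ[Rᵐᵒᵖ] R := A'.subtype + B'.subtype.comp ψ.toLinearMap with hdmap
  have hdmap_app : ∀ a : ↥A', dmap a = (a : R) + ((ψ a : ↥B') : R) := fun a => rfl
  set D := LinearMap.range dmap with hDdef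
  have hAD : A ⊓ D = ⊥ := by
    rw [eq_bot_iff]
    rintro x ⟨hxA, hxD⟩
    obtain ⟨a, ha⟩ := hxD
    rw [hdmap_app] at ha
    have h1 : ((ψ a : ↥B') : R) ∈ X ⊓ Xc := by
      constructor
      · rw [hXdef]
        refine ⟨?_, hB'B (ψ a).2⟩
        have : ((ψ a : ↥B') : R) = x - (a : R) := by rw [← ha]; abel
        rw [this]
        exact Submodule.sub_mem A hxA (hA'A a.2)
      · exact hB'Xc (ψ a).2
    rw [hXXc, Submodule.mem_bot] at h1
    have h2 : ψ a = 0 := Subtype.ext h1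
    have h3 : a = 0 := by
      have := congrArg ψ.symm h2
      rw [ψ.symm_apply_apply, map_zero] at this
      exact this
    rw [Submodule.mem_bot, ← ha, h3]
    simp
  have hBD : B ⊓ D = ⊥ := by
    rw [eq_bot_iff]
    rintro x ⟨hxB, hxD⟩
    obtain ⟨a, ha⟩ := hxD
    rw [hdmap_app] at ha
    have h1 : (a : R) ∈ X ⊓ Xc := by
      constructor
      · rw [hXdef]
        refine ⟨hA'A a.2, ?_⟩
        have : (a : R) = x - ((ψ a : ↥B') : R) := by rw [← ha]; abel
        rw [this]
        exact Submodule.sub_mem B hxB (hB'B (ψ a).2)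
      · exact hA'Xc a.2
    rw [hXXc, Submodule.mem_bot] at h1
    have h3 : a = 0 := Subtype.ext h1
    rw [Submodule.mem_bot, ← ha, h3]
    simp
  set T := A ⊔ B with hTdef
  obtain ⟨Tc, hTc⟩ := principal_isCompl hreg (sup_principal hreg hA hB)
  have hDT : D ≤ T := by
    rintro x ⟨a, rfl⟩
    rw [hdmap_app]
    exact Submodule.add_mem _ (Submodule.mem_sup_left (hA'A a.2))
      (Submodule.mem_sup_right (hB'B (ψ a).2))
  have hAD_sup : A ⊔ D = T := by
    apply le_antisymm (sup_le le_sup_left hDT)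
    apply sup_le le_sup_left
    rw [← hsupB]
    apply sup_le (le_trans hXA le_sup_left)
    intro x hx
    set bb : ↥B' := ⟨x, hx⟩ with hbb
    set a := ψ.symm bb with haa
    have h1 : dmap a ∈ D := LinearMap.mem_range_self _ _
    have h2 : dmap a = (a : R) + x := by
      rw [hdmap_app, haa, ψ.apply_symm_apply]
    have h3 : x = dmap a + (-(a : R)) := by rw [h2]; abel
    rw [h3]
    exact Submodule.add_mem _ (Submodule.mem_sup_right h1)
      (Submodule.mem_sup_left (Submodule.neg_mem _ (hA'A a.2)))
  have hBD_sup : B ⊔ D = T := by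
    apply le_antisymm (sup_le le_sup_right hDT)
    apply sup_le _ le_sup_left
    rw [← hsupA]
    apply sup_le (le_trans hXB le_sup_left)
    intro x hx
    set a : ↥A' := ⟨x, hx⟩ with haa
    have h1 : dmap a ∈ D := LinearMap.mem_range_self _ _
    have h3 : x = dmap a + (-((ψ a : ↥B') : R)) := by rw [hdmap_app]; abel
    rw [h3]
    exact Submodule.add_mem _ (Submodule.mem_sup_right h1)
      (Submodule.mem_sup_left (Submodule.neg_mem _ (hB'B (ψ a).2)))
  set C := D ⊔ Tc with hCdef
  have hTTc : T ⊓ Tc = ⊥ := disjoint_iff.1 hTc.disjoint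
  have hACompl : IsCompl A C := by
    constructor
    · rw [disjoint_iff, eq_bot_iff]
      rintro x ⟨hxA, hxC⟩
      have hxD : x ∈ D := sup_cancel_right hDT hTTc hxC (le_sup_left (a := A) (b := B) hxA)
      rw [← hAD]
      exact ⟨hxA, hxD⟩
    · rw [codisjoint_iff, hCdef, ← sup_assoc, hAD_sup, codisjoint_iff.1 hTc.codisjoint]
  have hBCompl : IsCompl B C := by
    constructor
    · rw [disjoint_iff, eq_bot_iff]
      rintro x ⟨hxB, hxC⟩
      have hxD : x ∈ D := sup_cancel_right hDT hTTc hxC (le_sup_right (a := A) (b := B) hxB)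
      rw [← hBD]
      exact ⟨hxB, hxD⟩
    · rw [codisjoint_iff, hCdef, ← sup_assoc, hBD_sup, codisjoint_iff.1 hTc.codisjoint]
  obtain ⟨q, _, hq⟩ := summand_principal hACompl.symm
  exact ⟨C, ⟨q, hq⟩, hACompl, hBCompl⟩

/-- left multiplication as an `Rᵐᵒᵖ`-linear endomorphism of `R` -/
def lmul (c : R) : R →ₗ[Rᵐᵒᵖ] R where
  toFun := fun x => c * x
  map_add' := mul_add c
  map_smul' := fun r x => by
    simp only [RingHom.id_apply]
    show c * (x * r.unop) = (c * x) * r.unop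
    rw [mul_assoc]

lemma reflexive_iso {a b : R} (hab : a * b * a = a) (hba : b * a * b = b) :
    ∃ φ : (↥(Submodule.span Rᵐᵒᵖ ({b} : Set R)) ≃ₗ[Rᵐᵒᵖ] ↥(Submodule.span Rᵐᵒᵖ ({a} : Set R))),
      (∀ x : ↥(Submodule.span Rᵐᵒᵖ ({b} : Set R)), (φ x : R) = a * x) ∧
      (∀ y : ↥(Submodule.span Rᵐᵒᵖ ({a} : Set R)), (φ.symm y : R) = b * y) := by
  set bR := Submodule.span Rᵐᵒᵖ ({b} : Set R) with hbR
  set aR := Submodule.span Rᵐᵒᵖ ({a} : Set R) with haR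
  have hmapa : ∀ x : ↥bR, a * (x : R) ∈ aR := by
    rintro ⟨x, hx⟩
    obtain ⟨r, rfl⟩ := mem_spanS.1 hx
    exact mem_spanS.2 ⟨b * r, by rw [← mul_assoc]⟩
  have hmapb : ∀ y : ↥aR, b * (y : R) ∈ bR := by
    rintro ⟨y, hy⟩
    obtain ⟨r, rfl⟩ := mem_spanS.1 hy
    exact mem_spanS.2 ⟨a * r, by rw [← mul_assoc]⟩
  set f : ↥bR →ₗ[Rᵐᵒᵖ] ↥aR :=
    LinearMap.codRestrict aR ((lmul a).comp bR.subtype) (fun x => hmapa x) with hf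
  set g : ↥aR →ₗ[Rᵐᵒᵖ] ↥bR :=
    LinearMap.codRestrict bR ((lmul b).comp aR.subtype) (fun y => hmapb y) with hg
  have hfg : ∀ y : ↥aR, f (g y) = y := by
    rintro ⟨y, hy⟩
    obtain ⟨r, rfl⟩ := mem_spanS.1 hy
    apply Subtype.ext
    show a * (b * (a * r)) = a * r
    rw [← mul_assoc, ← mul_assoc, hab]
  have hgf : ∀ x : ↥bR, g (f x) = x := by
    rintro ⟨x, hx⟩
    obtain ⟨r, rfl⟩ := mem_spanS.1 hx
    apply Subtype.ext
    show b * (a * (b * r)) = b * r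
    rw [← mul_assoc, ← mul_assoc, hba]
  refine ⟨LinearEquiv.ofLinear f g (LinearMap.ext hfg) (LinearMap.ext hgf), fun x => rfl,
    fun y => rfl⟩

end AuxMachinery

/-- In a von Neumann regular ring `R`, if `A, B` are principal right
ideals with `A ⊓ B` of finite height in `L(R)`, then `A` and `B` are perspective in
`L(R)` iff they are isomorphic as right `R`-modules. Consequently, if `a` has a
reflexive inverse `b` with `bR ⊓ aR` of finite height in `L(R)`, then `a` is
unit-regular. -/
theorem stmt19 {R : Type*} [Ring R] (hreg : ∀ a : R, ∃ x, a * x * a = a) :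
    (∀ A B : Submodule Rᵐᵒᵖ R, IsPrincipalRightIdeal A → IsPrincipalRightIdeal B →
      FinHeightInLR (A ⊓ B) →
      ((∃ C : Submodule Rᵐᵒᵖ R, IsPrincipalRightIdeal C ∧ IsCompl A C ∧ IsCompl B C)
        ↔ Nonempty (A ≃ₗ[Rᵐᵒᵖ] B))) ∧
    (∀ a b : R, a * b * a = a → b * a * b = b →
      FinHeightInLR (Submodule.span Rᵐᵒᵖ ({b} : Set R) ⊓
        Submodule.span Rᵐᵒᵖ ({a} : Set R)) →
      ∃ u : Rˣ, a * ↑u * a = a) := by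
  constructor
  · intro A B hA hB hfin
    constructor
    · rintro ⟨C, _, hAC, hBC⟩
      exact ⟨(Submodule.quotientEquivOfIsCompl C A hAC.symm).symm.trans
        (Submodule.quotientEquivOfIsCompl C B hBC.symm)⟩
    · rintro ⟨φ⟩
      obtain ⟨n, hn⟩ := hfin
      obtain ⟨C, hCp, h1, h2⟩ := common_compl hreg hA hB hn φ
      exact ⟨C, hCp, h1, h2⟩
  · intro a b hab hba hfin
    obtain ⟨n, hn⟩ := hfin
    obtain ⟨φ, hφ, hφs⟩ := reflexive_iso hab hba
    obtain ⟨C, _, hbC, haC⟩ := common_compl hreg (A := Submodule.span Rᵐᵒᵖ ({b} : Set R))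
      (B := Submodule.span Rᵐᵒᵖ ({a} : Set R)) ⟨b, rfl⟩ ⟨a, rfl⟩ hn φ
    set h : R ≃ₗ[Rᵐᵒᵖ] R :=
      (Submodule.prodEquivOfIsCompl (Submodule.span Rᵐᵒᵖ ({b} : Set R)) C hbC).symm.trans
        ((φ.prodCongr (LinearEquiv.refl Rᵐᵒᵖ ↥C)).trans
          (Submodule.prodEquivOfIsCompl (Submodule.span Rᵐᵒᵖ ({a} : Set R)) C haC)) with hh
    have hmul : ∀ x, h x = h 1 * x := fun x => by
      have h1 : x = (MulOpposite.op x) • (1 : R) := by simp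
      conv_lhs => rw [h1]
      rw [map_smul]
      rfl
    have hmul' : ∀ x, h.symm x = h.symm 1 * x := fun x => by
      have h1 : x = (MulOpposite.op x) • (1 : R) := by simp
      conv_lhs => rw [h1]
      rw [map_smul]
      rfl
    have huv : h 1 * h.symm 1 = 1 := by rw [← hmul (h.symm 1)]; exact h.apply_symm_apply 1
    have hvu : h.symm 1 * h 1 = 1 := by rw [← hmul' (h 1)]; exact h.symm_apply_apply 1
    have hva : h.symm 1 * a = b * a := by
      rw [← hmul' a]
      have ha_mem : a ∈ Submodule.span Rᵐᵒᵖ ({a} : Set R) := self_mem_spanS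
      have e3 : (Submodule.prodEquivOfIsCompl (Submodule.span Rᵐᵒᵖ ({a} : Set R)) C haC).symm a
          = ((⟨a, ha_mem⟩ : ↥(Submodule.span Rᵐᵒᵖ ({a} : Set R))), (0 : ↥C)) :=
        Submodule.prodEquivOfIsCompl_symm_apply_left _ C haC
          (⟨a, ha_mem⟩ : ↥(Submodule.span Rᵐᵒᵖ ({a} : Set R)))
      have hsa : h.symm a
          = (Submodule.prodEquivOfIsCompl (Submodule.span Rᵐᵒᵖ ({b} : Set R)) C hbC)
          ((φ.prodCongr (LinearEquiv.refl Rᵐᵒᵖ ↥C)).symm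
            ((Submodule.prodEquivOfIsCompl (Submodule.span Rᵐᵒᵖ ({a} : Set R)) C haC).symm a))
          := rfl
      rw [hsa, e3, LinearEquiv.prodCongr_symm, LinearEquiv.prodCongr_apply,
        Submodule.coe_prodEquivOfIsCompl']
      simp only [LinearEquiv.refl_symm, LinearEquiv.refl_apply, map_zero]
      rw [hφs (⟨a, ha_mem⟩ : ↥(Submodule.span Rᵐᵒᵖ ({a} : Set R)))]
      simp
    refine ⟨⟨h.symm 1, h 1, hvu, huv⟩, ?_⟩
    show a * (h.symm 1) * a = a
    rw [mul_assoc, hva, ← mul_assoc, hab]
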